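/- Let G be an s-connected finite simple graph whose independence number is at most s. Then G has a Hamiltonian cycle. -/

import Mathlib

open SimpleGraph

variable {V : Type*}

/-- `G` has independence number at most `k`: every independent set has at most `k` vertices. -/
def IndepBound (G : SimpleGraph V) (k : ℕ) : Prop :=
  ∀ s : Finset V, (∀ a ∈ s, ∀ b ∈ s, a ≠ b → ¬ G.Adj a b) → s.card ≤ k

/-- The induced subgraph on `A` has independence number at most `k`. -/
def IndepBoundOn (G : SimpleGraph V) (A : Set V) (k : ℕ) : Prop :=
  ∀ s : Finset V, ↑s ⊆ A → (∀ a ∈ s, ∀ b ∈ s, a ≠ b → ¬ G.Adj a b) → s.card ≤ k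

/-- `x` is a cut vertex (articulation point): `G - x` is disconnected. -/
def IsCutVertex (G : SimpleGraph V) (x : V) : Prop :=
  ¬ (G.induce ({x}ᶜ : Set V)).Preconnected

/-- `S` is a vertex cut: `G - S` is disconnected. -/
def IsCutSet (G : SimpleGraph V) (S : Set V) : Prop :=
  ¬ (G.induce Sᶜ).Preconnected

/-- `G` has a Hamiltonian path with endpoints `u` and `v`. -/
def HasHamPathBetween [DecidableEq V] (G : SimpleGraph V) (u v : V) : Prop :=
  ∃ p : G.Walk u v, p.IsHamiltonian

/-- `G` has a Hamiltonian path starting at `u`. -/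
def HasHamPathFrom [DecidableEq V] (G : SimpleGraph V) (u : V) : Prop :=
  ∃ v, ∃ p : G.Walk u v, p.IsHamiltonian

/-- `G` has a Hamiltonian path. -/
def HasHamPath [DecidableEq V] (G : SimpleGraph V) : Prop :=
  ∃ u v, ∃ p : G.Walk u v, p.IsHamiltonian

/-- `G` has a path cover of size two: two vertex-disjoint paths, one starting at `u`
and the other starting at `v`, whose vertex sets partition `V(G)`. -/
def HasPathCover2 (G : SimpleGraph V) (u v : V) : Prop :=
  ∃ (a b : V) (p : G.Walk u a) (q : G.Walk v b), p.IsPath ∧ q.IsPath ∧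
    ∀ w, (w ∈ p.support ∧ w ∉ q.support) ∨ (w ∈ q.support ∧ w ∉ p.support)

/-- `G` is `s`-connected: more than `s` vertices, and removing any fewer than `s`
vertices leaves the graph connected. -/
def SConnected (G : SimpleGraph V) (s : ℕ) : Prop :=
  s < Nat.card V ∧ ∀ S : Set V, S.ncard < s → (G.induce Sᶜ).Connected


set_option linter.unusedSectionVars false

section ChvatalErdosAux

open SimpleGraph.Walk

variable {V : Type*} [DecidableEq V] {G : SimpleGraph V} {r u z : V}

private lemma mem_dropLast_support {C : G.Walk r r} (hnil : ¬ C.Nil) (hu : u ∈ C.support) :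
    u ∈ C.support.dropLast := by
  have hsp : C.support = C.support.dropLast ++ [r] := by
    have h1 : C.support ≠ [] := C.support_ne_nil
    conv_lhs => rw [← List.dropLast_append_getLast h1]
    rw [C.getLast_support]
  have hr : r ∈ C.support.dropLast := by
    have h2 : C.support = r :: C.support.tail := C.support_eq_cons
    have h3 : C.support.tail ≠ [] := by
      intro h
      rw [nil_iff_support_eq] at hnil
      apply hnil
      rw [h2, h]
    rw [h2, List.dropLast_cons_of_ne_nil h3]
    exact List.mem_cons_self
  rw [hsp] at hu
  rcases List.mem_append.1 hu with h | h
  · exact h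
  · simpa using (List.mem_singleton.1 h) ▸ hr

private lemma exists_dart_fst {C : G.Walk r r} (hnil : ¬ C.Nil) (hu : u ∈ C.support) :
    ∃ d ∈ C.darts, d.fst = u := by
  have := mem_dropLast_support hnil hu
  rw [← C.map_fst_darts] at this
  obtain ⟨d, hd, hfst⟩ := List.mem_map.1 this
  exact ⟨d, hd, hfst⟩

private lemma cycle_tail_ne_nil {C : G.Walk r r} (hC : C.IsCycle) : C.support.tail ≠ [] := by
  intro h
  have := C.support_eq_cons
  rw [h] at this
  exact hC.not_nil (nil_iff_support_eq.2 this)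

private lemma cycle_dropLast_nodup {C : G.Walk r r} (hC : C.IsCycle) :
    C.support.dropLast.Nodup := by
  have h2 : C.support = r :: C.support.tail := C.support_eq_cons
  have h3 : C.support.tail ≠ [] := cycle_tail_ne_nil hC
  have htl : C.support.tail.getLast h3 = r := by
    rw [List.getLast_tail]
    exact C.getLast_support
  have hnd : C.support.tail.Nodup := hC.2
  have hsplit : C.support.tail.dropLast ++ [r] = C.support.tail := by
    conv_rhs => rw [← List.dropLast_append_getLast h3]
    rw [htl]
  have hrn : r ∉ C.support.tail.dropLast := by
    intro hr
    rw [← hsplit] at hnd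
    rcases List.nodup_append.1 hnd with ⟨-, -, hdisj⟩
    exact hdisj r hr r (List.mem_singleton_self r) rfl
  rw [h2, List.dropLast_cons_of_ne_nil h3]
  exact List.Nodup.cons hrn (hnd.sublist (List.dropLast_sublist _))

private lemma dart_fst_inj {C : G.Walk r r} (hC : C.IsCycle) {d₁ d₂ : G.Dart}
    (h₁ : d₁ ∈ C.darts) (h₂ : d₂ ∈ C.darts) (h : d₁.fst = d₂.fst) : d₁ = d₂ := by
  have hn : (C.darts.map (·.fst)).Nodup := by
    rw [C.map_fst_darts]; exact cycle_dropLast_nodup hC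
  exact List.inj_on_of_nodup_map hn h₁ h₂ h

private lemma dart_snd_inj {C : G.Walk r r} (hC : C.IsCycle) {d₁ d₂ : G.Dart}
    (h₁ : d₁ ∈ C.darts) (h₂ : d₂ ∈ C.darts) (h : d₁.snd = d₂.snd) : d₁ = d₂ := by
  have hn : (C.darts.map (·.snd)).Nodup := by
    rw [C.map_snd_darts]; exact hC.2
  exact List.inj_on_of_nodup_map hn h₁ h₂ h

/-- The successor of a vertex on a closed walk. -/
noncomputable def nxt (C : G.Walk r r) (u : V) : V :=
  if h : ∃ d ∈ C.darts, d.fst = u then h.choose.snd else u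

private lemma nxt_dart {C : G.Walk r r} (hnil : ¬ C.Nil) (hu : u ∈ C.support) :
    ∃ d ∈ C.darts, d.fst = u ∧ d.snd = nxt C u := by
  have h : ∃ d ∈ C.darts, d.fst = u := exists_dart_fst hnil hu
  refine ⟨h.choose, h.choose_spec.1, h.choose_spec.2, ?_⟩
  rw [nxt, dif_pos h]

private lemma nxt_mem_support {C : G.Walk r r} (hnil : ¬ C.Nil) (hu : u ∈ C.support) :
    nxt C u ∈ C.support := by
  obtain ⟨d, hd, -, h2⟩ := nxt_dart hnil hu
  exact h2 ▸ C.dart_snd_mem_support_of_mem_darts hd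

private lemma adj_nxt {C : G.Walk r r} (hnil : ¬ C.Nil) (hu : u ∈ C.support) :
    G.Adj u (nxt C u) := by
  obtain ⟨d, hd, h1, h2⟩ := nxt_dart hnil hu
  have := d.adj
  rw [h1, h2] at this
  exact this

private lemma nxt_ne {C : G.Walk r r} (hnil : ¬ C.Nil) (hu : u ∈ C.support) :
    nxt C u ≠ u := fun h => G.irrefl (h ▸ adj_nxt hnil hu)

private lemma nxt_injOn {C : G.Walk r r} (hC : C.IsCycle) {u₁ u₂ : V}
    (h₁ : u₁ ∈ C.support) (h₂ : u₂ ∈ C.support) (h : nxt C u₁ = nxt C u₂) : u₁ = u₂ := by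
  obtain ⟨d₁, hd₁, hf₁, hs₁⟩ := nxt_dart hC.not_nil h₁
  obtain ⟨d₂, hd₂, hf₂, hs₂⟩ := nxt_dart hC.not_nil h₂
  have : d₁ = d₂ := dart_snd_inj hC hd₁ hd₂ (by rw [hs₁, hs₂, h])
  rw [← hf₁, ← hf₂, this]

private lemma firstDart_mem_darts {v w : V} (p : G.Walk v w) (hp : ¬ p.Nil) :
    p.firstDart hp ∈ p.darts := by
  cases p with
  | nil => simp at hp
  | cons h q =>
    rw [darts_cons]
    refine List.mem_cons.2 (Or.inl ?_)
    have h1 : (cons h q).firstDart hp = Dart.mk (_, (cons h q).getVert 1) ((cons h q).adj_snd hp) := rfl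
    rw [h1]
    congr 1
    simp

private lemma length_rotate {C : G.Walk r r} (hu : u ∈ C.support) :
    (C.rotate u hu).length = C.length := by
  rw [Walk.rotate, length_append, add_comm, ← length_append, take_spec]

private lemma mem_support_tail_iff {C : G.Walk r r} (hnil : ¬ C.Nil) :
    z ∈ C.support ↔ z ∈ C.support.tail := by
  constructor
  · intro hz
    have h3 : C.support.tail ≠ [] := by
      intro h
      rw [nil_iff_support_eq] at hnil
      exact hnil (by rw [C.support_eq_cons, h])
    have htl : C.support.tail.getLast h3 = r := by
      rw [List.getLast_tail]; exact C.getLast_support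
    rw [C.support_eq_cons] at hz
    rcases List.mem_cons.1 hz with h | h
    · have h4 := List.getLast_mem h3
      rw [htl] at h4
      rwa [h]
    · exact h
  · exact fun h => List.mem_of_mem_tail h

private lemma mem_support_rotate {C : G.Walk r r} (hC : C.IsCycle) (hu : u ∈ C.support) :
    (z ∈ (C.rotate u hu).support ↔ z ∈ C.support) := by
  rw [mem_support_tail_iff (hC.rotate hu).not_nil, mem_support_tail_iff hC.not_nil]
  exact (C.support_rotate u hu).mem_iff

private lemma dart_snd_eq_nxt {C : G.Walk r r} (hC : C.IsCycle) {d : G.Dart}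
    (hd : d ∈ C.darts) : d.snd = nxt C d.fst := by
  obtain ⟨d', hd', hf', hs'⟩ := nxt_dart hC.not_nil (C.dart_fst_mem_support_of_mem_darts hd)
  rw [← hs', dart_fst_inj hC hd hd' hf'.symm]

private lemma rotate_decomp {C : G.Walk r r} (hC : C.IsCycle) (hu : u ∈ C.support) :
    ∃ q : G.Walk (nxt C u) u, q.IsPath ∧ q.length + 1 = C.length ∧
      (∀ z, z ∈ q.support ↔ z ∈ C.support) ∧
      (∀ d ∈ q.darts, d ∈ C.darts) ∧ s(u, nxt C u) ∉ q.edges := by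
  set Cu := C.rotate u hu with hCudef
  have hCu : Cu.IsCycle := hC.rotate hu
  have hnil : ¬ Cu.Nil := hCu.not_nil
  have hcons : cons (Cu.adj_snd hnil) Cu.tail = Cu := Cu.cons_tail_eq hnil
  have hdmem : ∀ d ∈ Cu.darts, d ∈ C.darts := fun d hd => (C.rotate_darts u hu).mem_iff.1 hd
  have hx : Cu.getVert 1 = nxt C u := by
    have h1 : Cu.firstDart hnil ∈ C.darts := hdmem _ (firstDart_mem_darts Cu hnil)
    exact dart_snd_eq_nxt hC h1
  have hcyc2 : Cu.tail.IsPath ∧ s(u, Cu.getVert 1) ∉ Cu.tail.edges := by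
    rw [← Walk.cons_isCycle_iff]
    · rw [hcons]; exact hCu
    · exact Cu.adj_snd hnil
  refine ⟨Cu.tail.copy hx rfl, ?_, ?_, ?_, ?_, ?_⟩
  · rw [Walk.isPath_copy]; exact hcyc2.1
  · rw [Walk.length_copy]
    have := Cu.length_tail_add_one hnil
    rw [this]
    exact length_rotate hu
  · intro z
    rw [Walk.support_copy, Cu.support_tail_of_not_nil hnil, ← mem_support_tail_iff hnil]
    exact mem_support_rotate hC hu
  · intro d hd
    rw [Walk.darts_copy] at hd
    apply hdmem
    rw [← hcons, darts_cons]
    exact List.mem_cons_of_mem _ hd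
  · rw [Walk.edges_copy, ← hx]
    exact hcyc2.2

private lemma surgery_consec {C : G.Walk r r} (hC : C.IsCycle)
    (hmax : ∀ (w : V) (p : G.Walk w w), p.IsCycle → p.length ≤ C.length)
    {u a b : V} (hu : u ∈ C.support)
    (ha : G.Adj u a) (hb : G.Adj b (nxt C u))
    {M : G.Walk a b} (hM : M.IsPath) (hMC : ∀ z ∈ M.support, z ∉ C.support) : False := by
  obtain ⟨q, hq, hqlen, hqsupp, -, -⟩ := rotate_decomp hC hu
  set W : G.Walk a u := M.append (cons hb q) with hW
  have hWsupp : W.support = M.support ++ q.support := by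
    rw [hW, support_append, support_cons, List.tail_cons]
  have hWpath : W.IsPath := by
    apply Walk.IsPath.mk'
    rw [hWsupp]
    exact List.nodup_append.2 ⟨hM.support_nodup, hq.support_nodup,
      fun z hz b hz' hzb => hMC z hz ((hqsupp z).1 (by rw [hzb]; exact hz'))⟩
  have hWedge : s(u, a) ∉ W.edges := by
    rw [hW, edges_append, edges_cons]
    intro hmem
    rcases List.mem_append.1 hmem with h | h
    · exact hMC u (M.fst_mem_support_of_mem_edges h) hu
    · rcases List.mem_cons.1 h with h | h
      · rcases Sym2.eq_iff.1 h with ⟨h1, h2⟩ | ⟨h1, h2⟩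
        · exact hMC b M.end_mem_support (h1 ▸ hu)
        · exact nxt_ne hC.not_nil hu h1.symm
      · exact hMC a (M.start_mem_support) ((hqsupp a).1 (q.snd_mem_support_of_mem_edges h))
  have hcyc : (cons ha W).IsCycle := (Walk.cons_isCycle_iff W ha).2 ⟨hWpath, hWedge⟩
  have hlen := hmax u (cons ha W) hcyc
  rw [length_cons, hW, length_append, length_cons] at hlen
  omega

private lemma surgery_cross {C : G.Walk r r} (hC : C.IsCycle)
    (hmax : ∀ (w : V) (p : G.Walk w w), p.IsCycle → p.length ≤ C.length)
    {u₁ u₂ a b : V} (h₁ : u₁ ∈ C.support) (h₂ : u₂ ∈ C.support)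
    (hne : u₁ ≠ u₂) (hn2 : nxt C u₂ ≠ u₁)
    (ha : G.Adj u₁ a) (hb : G.Adj b u₂)
    {M : G.Walk a b} (hM : M.IsPath) (hMC : ∀ z ∈ M.support, z ∉ C.support)
    (hxy : G.Adj (nxt C u₁) (nxt C u₂)) : False := by
  obtain ⟨q, hq, hqlen, hqsupp, hqdarts, -⟩ := rotate_decomp hC h₁
  have hu₂q : u₂ ∈ q.support := (hqsupp u₂).2 h₂
  set q1 := q.takeUntil u₂ hu₂q with hq1
  set q2 := q.dropUntil u₂ hu₂q with hq2
  have hspec : q1.append q2 = q := q.take_spec hu₂q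
  have hnil2 : ¬ q2.Nil := Walk.not_nil_of_ne hne.symm
  have hy : q2.getVert 1 = nxt C u₂ := by
    have hd : q2.firstDart hnil2 ∈ C.darts := by
      apply hqdarts
      exact q.darts_dropUntil_subset hu₂q (firstDart_mem_darts q2 hnil2)
    exact dart_snd_eq_nxt hC hd
  set q3 : G.Walk (nxt C u₂) u₁ := q2.tail.copy hy rfl with hq3
  have hq2cons : cons (q2.adj_snd hnil2) q2.tail = q2 := q2.cons_tail_eq hnil2
  have hsupp13 : q.support = q1.support ++ q3.support := by
    rw [← hspec, support_append, hq3, Walk.support_copy, q2.support_tail_of_not_nil hnil2]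
  have hnodup13 : (q1.support ++ q3.support).Nodup := hsupp13 ▸ hq.support_nodup
  have hsub1 : ∀ z ∈ q1.support, z ∈ C.support := fun z hz =>
    (hqsupp z).1 (hsupp13 ▸ List.mem_append.2 (Or.inl hz))
  have hsub3 : ∀ z ∈ q3.support, z ∈ C.support := fun z hz =>
    (hqsupp z).1 (hsupp13 ▸ List.mem_append.2 (Or.inr hz))
  set R : G.Walk u₂ u₁ := q1.reverse.append (cons hxy q3) with hR
  set W : G.Walk a u₁ := M.append (cons hb R) with hW
  have hRsupp : R.support = q1.support.reverse ++ q3.support := by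
    rw [hR, support_append, support_cons, List.tail_cons, support_reverse]
  have hWsupp : W.support = M.support ++ (q1.support.reverse ++ q3.support) := by
    rw [hW, support_append, support_cons, List.tail_cons, hRsupp]
  have hWpath : W.IsPath := by
    apply Walk.IsPath.mk'
    rw [hWsupp]
    rcases List.nodup_append.1 hnodup13 with ⟨hnd1, hnd3, hdisj⟩
    refine List.nodup_append.2 ⟨hM.support_nodup, ?_, ?_⟩
    · refine List.nodup_append.2 ⟨List.nodup_reverse.2 hnd1, hnd3, ?_⟩
      intro z hz b hz' hzb
      exact hdisj z (List.mem_reverse.1 hz) b hz' hzb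
    · intro z hz b hz' hzb
      subst hzb
      rcases List.mem_append.1 hz' with h | h
      · exact hMC z hz (hsub1 z (List.mem_reverse.1 h))
      · exact hMC z hz (hsub3 z h)
  have hWedge : s(u₁, a) ∉ W.edges := by
    rw [hW, edges_append, edges_cons, hR, edges_append, edges_cons, edges_reverse]
    intro hmem
    rcases List.mem_append.1 hmem with h | h
    · exact hMC u₁ (M.fst_mem_support_of_mem_edges h) h₁
    rcases List.mem_cons.1 h with h | h
    · rcases Sym2.eq_iff.1 h with ⟨hh1, hh2⟩ | ⟨hh1, hh2⟩
      · exact hMC b M.end_mem_support (hh1 ▸ h₁)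
      · exact hne hh1
    rcases List.mem_append.1 h with h | h
    · rw [List.mem_reverse] at h
      exact hMC a M.start_mem_support (hsub1 a (q1.snd_mem_support_of_mem_edges h))
    rcases List.mem_cons.1 h with h | h
    · rcases Sym2.eq_iff.1 h with ⟨hh1, hh2⟩ | ⟨hh1, hh2⟩
      · exact nxt_ne hC.not_nil h₁ hh1.symm
      · exact hn2 hh1.symm
    · exact hMC a M.start_mem_support (hsub3 a (q3.snd_mem_support_of_mem_edges h))
  have hcyc : (cons ha W).IsCycle := (Walk.cons_isCycle_iff W ha).2 ⟨hWpath, hWedge⟩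
  have hlen := hmax u₁ (cons ha W) hcyc
  have hlq : q1.length + q2.length = q.length := by
    rw [← hspec, length_append]
  have hlq3 : q3.length + 1 = q2.length := by
    rw [hq3, Walk.length_copy]
    exact q2.length_tail_add_one hnil2
  rw [length_cons, hW, length_append, length_cons, hR, length_append, length_cons,
    Walk.length_reverse] at hlen
  omega

private lemma exists_cycle_of_two_nbrs [Fintype V] (hV : Nonempty V)
    (hdeg : ∀ x : V, ∃ y z, y ≠ z ∧ G.Adj x y ∧ G.Adj x z) :
    ∃ (w : V) (p : G.Walk w w), p.IsCycle := by
  classical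
  set L : Set ℕ := {n | ∃ (x y : V) (p : G.Walk x y), p.IsPath ∧ p.length = n} with hL
  obtain ⟨x₀⟩ := hV
  obtain ⟨y₀, z₀, hyz₀, hy₀, hz₀⟩ := hdeg x₀
  have hone : (1 : ℕ) ∈ L := by
    refine ⟨x₀, y₀, cons hy₀ nil, ?_, by simp⟩
    apply Walk.IsPath.mk'
    simp [hy₀.ne]
  have hbdd : BddAbove L := by
    refine ⟨Fintype.card V, fun n hn => ?_⟩
    obtain ⟨x, y, p, hp, hlen⟩ := hn
    exact hlen ▸ (hp.length_lt).le
  have hmem : sSup L ∈ L := Nat.sSup_mem ⟨1, hone⟩ hbdd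
  obtain ⟨x, y, p, hp, hlen⟩ := hmem
  have hmax : ∀ (a c : V) (q : G.Walk a c), q.IsPath → q.length ≤ p.length := by
    intro a c q hq
    rw [hlen]
    exact le_csSup hbdd ⟨a, c, q, hq, rfl⟩
  have hone' : 1 ≤ p.length := by
    rw [hlen]; exact le_csSup hbdd hone
  have hnil : ¬ p.Nil := by
    rw [Walk.not_nil_iff_lt_length]; omega
  have hcons : cons (p.adj_snd hnil) p.tail = p := p.cons_tail_eq hnil
  obtain ⟨y₁, z₁, hyz, hy, hz⟩ := hdeg x
  obtain ⟨w, hxw, hwne⟩ : ∃ w, G.Adj x w ∧ w ≠ p.getVert 1 := by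
    by_cases h : y₁ = p.getVert 1
    · exact ⟨z₁, hz, fun hh => hyz (by rw [h, hh])⟩
    · exact ⟨y₁, hy, h⟩
  have hwsup : w ∈ p.support := by
    by_contra hwp
    have hq : (cons (G.adj_symm hxw) p).IsPath := hp.cons hwp
    have := hmax _ _ _ hq
    rw [length_cons] at this
    omega
  set ct := p.takeUntil w hwsup with hct
  have hctpath : ct.IsPath := hp.takeUntil hwsup
  have hedge : s(w, x) ∉ ct.edges := by
    intro hmem'
    have hpe : s(w, x) ∈ p.edges := p.edges_takeUntil_subset hwsup hmem'
    rw [← hcons, edges_cons] at hpe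
    rcases List.mem_cons.1 hpe with h | h
    · rcases Sym2.eq_iff.1 h with ⟨h1, h2⟩ | ⟨h1, h2⟩
      · exact hxw.ne' h1
      · exact hwne h1
    · have hx : x ∈ p.tail.support := p.tail.snd_mem_support_of_mem_edges h
      have hsupp : x :: p.tail.support = p.support := p.cons_support_tail hnil
      have := hp.support_nodup
      rw [← hsupp] at this
      exact (List.nodup_cons.1 this).1 hx
  exact ⟨w, cons (G.adj_symm hxw) ct, (Walk.cons_isCycle_iff ct (G.adj_symm hxw)).2 ⟨hctpath, hedge⟩⟩

end ChvatalErdosAux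

/-- Chvátal–Erdős: an s-connected graph with independence number at most s has a
Hamiltonian cycle. -/
theorem stmt_15 [Fintype V] [DecidableEq V] (G : SimpleGraph V) (s : ℕ) (hs : 1 ≤ s)
    (hcard : 3 ≤ Fintype.card V) (hG : SConnected G s) (hα : IndepBound G s) :
    ∃ a, ∃ p : G.Walk a a, p.IsHamiltonianCycle := by
  classical
  -- Step 1: every vertex has two distinct neighbors
  have hdeg : ∀ x : V, ∃ y z, y ≠ z ∧ G.Adj x y ∧ G.Adj x z := by
    intro x
    by_contra hcon
    push_neg at hcon
    have hsingle : ∀ y z, G.Adj x y → G.Adj x z → y = z := by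
      intro y z hy hz
      by_contra hne
      exact (hcon y z hne hy) hz
    have hex : ∃ u : V, u ≠ x ∧ ∀ w, G.Adj x w → w = u := by
      by_cases hnbr : ∃ u, G.Adj x u
      · obtain ⟨u, hu⟩ := hnbr
        exact ⟨u, hu.ne', fun w hw => hsingle w u hw hu⟩
      · push_neg at hnbr
        obtain ⟨u, hu⟩ := Fintype.exists_ne_of_one_lt_card (by omega) x
        exact ⟨u, hu, fun w hw => absurd hw (hnbr w)⟩
    obtain ⟨u, hux, hunique⟩ := hex
    have hs1 : 1 < s ∨ s = 1 := by omega
    -- we handle both cases uniformly: if s = 1, independence number ≤ 1 forces all adjacency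
    rcases hs1 with hs2 | hs2
    · have hconn : (G.induce ({u} : Set V)ᶜ).Connected := by
        apply hG.2
        simpa [Set.ncard_singleton] using hs2
      obtain ⟨z, hzx, hzu⟩ : ∃ z : V, z ≠ x ∧ z ≠ u := by
        by_contra hno
        push_neg at hno
        have hsub : (Finset.univ : Finset V) ⊆ {x, u} := by
          intro w _
          rcases Classical.em (w = x) with h | h
          · simp [h]
          · simp [hno w h]
        have h1 := Finset.card_le_card hsub
        have h2 : ({x, u} : Finset V).card ≤ 2 := (Finset.card_insert_le _ _).trans (by simp)
        rw [Finset.card_univ] at h1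
        omega
      have hx' : x ∈ ({u} : Set V)ᶜ := by simp [Ne.symm hux]
      have hz' : z ∈ ({u} : Set V)ᶜ := by simp [hzu]
      obtain ⟨W⟩ := hconn.preconnected ⟨x, hx'⟩ ⟨z, hz'⟩
      have hWnil : ¬ W.Nil := Walk.not_nil_of_ne (by simp [hzx.symm])
      have hGadj : G.Adj x ↑(W.getVert 1) := W.adj_snd hWnil
      have h1u : (↑(W.getVert 1) : V) = u := hunique _ hGadj
      have h1ne := (W.getVert 1).2
      rw [Set.mem_compl_iff, Set.mem_singleton_iff] at h1ne
      exact h1ne h1u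
    · -- s = 1 : any two distinct vertices are adjacent
      have hadjall : ∀ a b : V, a ≠ b → G.Adj a b := by
        intro a b hab
        by_contra hnadj
        have := hα {a, b} ?_
        · rw [Finset.card_insert_of_notMem (by simp [hab]), Finset.card_singleton] at this
          omega
        · intro c hc d hd hcd
          simp only [Finset.mem_insert, Finset.mem_singleton] at hc hd
          rcases hc with rfl | rfl <;> rcases hd with rfl | rfl
          · exact absurd rfl hcd
          · exact hnadj
          · exact fun h => hnadj h.symm
          · exact absurd rfl hcd
      obtain ⟨z, hzx, hzu⟩ : ∃ z : V, z ≠ x ∧ z ≠ u := by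
        by_contra hno
        push_neg at hno
        have hsub : (Finset.univ : Finset V) ⊆ {x, u} := by
          intro w _
          rcases Classical.em (w = x) with h | h
          · simp [h]
          · simp [hno w h]
        have h1 := Finset.card_le_card hsub
        have h2 : ({x, u} : Finset V).card ≤ 2 := (Finset.card_insert_le _ _).trans (by simp)
        rw [Finset.card_univ] at h1
        omega
      have h1 : G.Adj x z := hadjall x z (Ne.symm hzx)
      exact hzu (hunique z h1)
  -- Step 2: a longest cycle exists
  have hVne : Nonempty V := Fintype.card_pos_iff.1 (by omega)
  obtain ⟨r₀, C₀, hC₀⟩ := exists_cycle_of_two_nbrs hVne hdeg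
  set L : Set ℕ := {n | ∃ (w : V) (p : G.Walk w w), p.IsCycle ∧ p.length = n} with hLdef
  have hbdd : BddAbove L := by
    refine ⟨Fintype.card V + 1, fun n hn => ?_⟩
    obtain ⟨w, p, hp, hlen⟩ := hn
    have : p.support.tail.length ≤ Fintype.card V :=
      List.Nodup.length_le_card hp.2
    have hsl : p.support.length = p.length + 1 := p.length_support
    have : p.support.tail.length = p.support.length - 1 := by simp
    omega
  have hmemL : sSup L ∈ L := Nat.sSup_mem ⟨C₀.length, r₀, C₀, hC₀, rfl⟩ hbdd
  obtain ⟨r, C, hC, hClen⟩ := hmemL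
  have hmax : ∀ (w : V) (p : G.Walk w w), p.IsCycle → p.length ≤ C.length := by
    intro w p hp
    rw [hClen]
    exact le_csSup hbdd ⟨w, p, hp, rfl⟩
  -- Step 3: if C is Hamiltonian we are done
  by_cases hham : ∀ w : V, w ∈ C.support
  · refine ⟨r, C, hC, ?_⟩
    have htp : C.tail.IsPath := by
      apply Walk.IsPath.mk'
      rw [C.support_tail_of_not_nil hC.not_nil]
      exact hC.2
    apply htp.isHamiltonian_of_mem
    intro w
    rw [C.support_tail_of_not_nil hC.not_nil, ← mem_support_tail_iff hC.not_nil]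
    exact hham w
  push_neg at hham
  obtain ⟨v, hv⟩ := hham
  exfalso
  -- Step 4: the off-cycle reachable set K of v
  set K : Set V := {w | ∃ q : G.Walk v w, ∀ z ∈ q.support, z ∉ C.support} with hKdef
  have hvK : v ∈ K := ⟨Walk.nil, by intro z hz; simp at hz; rwa [hz]⟩
  have hKC : ∀ w ∈ K, w ∉ C.support := by
    rintro w ⟨q, hq⟩
    exact hq w q.end_mem_support
  have hKadj : ∀ w ∈ K, ∀ x, G.Adj w x → x ∉ C.support → x ∈ K := by
    rintro w ⟨q, hq⟩ x hadj hx
    refine ⟨q.concat hadj, ?_⟩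
    intro z hz
    rw [Walk.support_concat] at hz
    rcases List.mem_append.1 hz with h | h
    · exact hq z h
    · rw [List.mem_singleton.1 h]; exact hx
  have hKpath : ∀ a ∈ K, ∀ b ∈ K,
      ∃ M : G.Walk a b, M.IsPath ∧ ∀ z ∈ M.support, z ∉ C.support := by
    rintro a ⟨qa, hqa⟩ b ⟨qb, hqb⟩
    set W0 : G.Walk a b := qa.reverse.append qb with hW0
    have hW0supp : ∀ z ∈ W0.support, z ∉ C.support := by
      intro z hz
      rcases (Walk.mem_support_append_iff _ _).1 hz with h | h
      · rw [Walk.support_reverse, List.mem_reverse] at h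
        exact hqa z h
      · exact hqb z h
    exact ⟨W0.toPath, W0.toPath.2, fun z hz => hW0supp z (W0.support_toPath_subset hz)⟩
  -- the attachment set
  set Aset : Set V := {u | u ∈ C.support ∧ ∃ a ∈ K, G.Adj u a} with hAdef
  -- no successor of an attachment vertex has a neighbor in K
  have hAn : ∀ u ∈ Aset, ∀ b ∈ K, ¬ G.Adj (nxt C u) b := by
    rintro u ⟨huC, a, haK, hadj⟩ b hbK hadj2
    obtain ⟨M, hM, hMC⟩ := hKpath a haK b hbK
    exact surgery_consec hC hmax huC hadj hadj2.symm hM hMC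
  have hAnotA : ∀ u ∈ Aset, nxt C u ∉ Aset := by
    rintro u huA ⟨-, b, hbK, hadj⟩
    exact hAn u huA b hbK hadj
  -- Step 5: the cut argument gives |Aset| ≥ s
  have hAsub : Aset ⊆ {z | z ∈ C.support} := fun z hz => hz.1
  have hAcard : s ≤ Aset.ncard := by
    by_contra hlt
    push_neg at hlt
    have hconn := hG.2 Aset hlt
    obtain ⟨c, hcC, hcA⟩ : ∃ c, c ∈ C.support ∧ c ∉ Aset := by
      by_contra hno
      push_neg at hno
      have hrA : r ∈ Aset := hno r C.start_mem_support
      have hnA : nxt C r ∈ Aset := hno _ (nxt_mem_support hC.not_nil C.start_mem_support)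
      exact hAnotA r hrA hnA
    have hv' : v ∈ Asetᶜ := fun hmem => hv (hAsub hmem)
    have hc' : c ∈ Asetᶜ := hcA
    obtain ⟨Wi⟩ := hconn.preconnected ⟨v, hv'⟩ ⟨c, hc'⟩
    set W : G.Walk v c := Wi.map (SimpleGraph.Embedding.induce Asetᶜ).toHom with hWdef
    have hWsub : ∀ z ∈ W.support, z ∉ Aset := by
      intro z hz
      rw [hWdef] at hz; erw [Walk.support_map, List.mem_map] at hz
      obtain ⟨⟨z', hz'⟩, -, rfl⟩ := hz
      exact hz'
    have hcK : c ∉ K := fun h => hKC c h hcC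
    obtain ⟨d, hd, hdfst, hdsnd⟩ := W.exists_boundary_dart K hvK hcK
    by_cases hsC : d.snd ∈ C.support
    · have : d.snd ∈ Aset := ⟨hsC, d.fst, hdfst, d.adj.symm⟩
      exact hWsub d.snd (W.dart_snd_mem_support_of_mem_darts hd) this
    · exact hdsnd (hKadj d.fst hdfst d.snd d.adj hsC)
  -- Step 6: build the independent set and contradict hα
  set F : Finset V := Aset.toFinset with hFdef
  have hFcard : F.card = Aset.ncard := (Set.ncard_eq_toFinset_card' Aset).symm
  have hFmem : ∀ u, u ∈ F ↔ u ∈ Aset := by intro u; rw [hFdef, Set.mem_toFinset]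
  set B : Finset V := F.image (nxt C) ∪ {v} with hBdef
  have himg : (F.image (nxt C)).card = F.card := by
    apply Finset.card_image_of_injOn
    intro u1 h1 u2 h2 heq
    exact nxt_injOn hC ((hFmem u1).1 h1).1 ((hFmem u2).1 h2).1 heq
  have hvnot : v ∉ F.image (nxt C) := by
    intro hmem
    obtain ⟨u, hu, hequ⟩ := Finset.mem_image.1 hmem
    exact hv (hequ ▸ nxt_mem_support hC.not_nil ((hFmem u).1 hu).1)
  have hBcard : B.card = F.card + 1 := by
    rw [hBdef, Finset.card_union_of_disjoint (by simp [hvnot]), himg, Finset.card_singleton]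
  have hindep : ∀ a ∈ B, ∀ b ∈ B, a ≠ b → ¬ G.Adj a b := by
    intro a ha b hb hab hadj
    rw [hBdef, Finset.mem_union, Finset.mem_singleton] at ha hb
    rcases ha with ha | hav <;> rcases hb with hb | hbv
    · obtain ⟨u1, hu1, rfl⟩ := Finset.mem_image.1 ha
      obtain ⟨u2, hu2, rfl⟩ := Finset.mem_image.1 hb
      have hu1A : u1 ∈ Aset := (hFmem u1).1 hu1
      have hu2A : u2 ∈ Aset := (hFmem u2).1 hu2
      have hu12 : u1 ≠ u2 := fun h => hab (h ▸ rfl)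
      by_cases hc1 : nxt C u1 = u2
      · exact hAnotA u1 hu1A (hc1 ▸ hu2A)
      by_cases hc2 : nxt C u2 = u1
      · exact hAnotA u2 hu2A (hc2 ▸ hu1A)
      obtain ⟨a1, ha1K, hadj1⟩ := hu1A.2
      obtain ⟨a2, ha2K, hadj2⟩ := hu2A.2
      obtain ⟨M, hM, hMC⟩ := hKpath a1 ha1K a2 ha2K
      exact surgery_cross hC hmax hu1A.1 hu2A.1 hu12 hc2 hadj1 hadj2.symm hM hMC hadj
    · obtain ⟨u, hu, rfl⟩ := Finset.mem_image.1 ha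
      rw [hbv] at hadj
      exact hAn u ((hFmem u).1 hu) v hvK hadj
    · obtain ⟨u, hu, rfl⟩ := Finset.mem_image.1 hb
      rw [hav] at hadj
      exact hAn u ((hFmem u).1 hu) v hvK hadj.symm
    · rw [hav, hbv] at hab
      exact hab rfl
  have := hα B hindep
  omega
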